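/- Let f : ℝ → ℂ be a function in L²(ℝ) such that f(x) = ∫_ℝ k(x,y) f(y) dy for every x ∈ ℝ. Write f_− = f·𝟙_{(−∞,0]}, f_+ = f·𝟙_{(0,∞)}, and f̌_+(x) = f_+(−x). Then for every x > 0, f(x) = Π_{c_+}[ f_+ + (ρ_+−ρ_−)· f̌_+·𝟙_{(−∞,0]} + 2ρ_−·√(c_−/c_+)·(δ_{c_+/c_−} f_−)·𝟙_{(−∞,0]} ](x). -/

import Mathlib

/-- `sinc t = sin t / t` for `t ≠ 0`, `sinc 0 = 1`. -/
noncomputable def sinc (t : ℝ) : ℝ := if t = 0 then 1 else Real.sin t / t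

/-- The reproducing kernel of the variable-bandwidth Paley–Wiener space
`PW_{[0,Ω]}(A_p)` in the toy model, where `p = p₋` on `(-∞, 0]` and `p = p₊` on
`(0, ∞)`, with `c_± = √(Ω/p_±)` and `ρ_± = √(p_±)/(√(p₋) + √(p₊))`. -/
noncomputable def toyKernel (pm pp Ω : ℝ) (x y : ℝ) : ℝ :=
  let cm := Real.sqrt (Ω / pm)
  let cp := Real.sqrt (Ω / pp)
  let rm := Real.sqrt pm / (Real.sqrt pm + Real.sqrt pp)
  let rp := Real.sqrt pp / (Real.sqrt pm + Real.sqrt pp)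
  if x ≤ 0 then
    if y ≤ 0 then (cm / Real.pi) * (sinc (cm * (x - y)) - (rp - rm) * sinc (cm * (x + y)))
    else (2 * cp * rp / Real.pi) * sinc (cm * x - cp * y)
  else
    if y ≤ 0 then (2 * cm * rm / Real.pi) * sinc (cp * x - cm * y)
    else (cp / Real.pi) * (sinc (cp * (x - y)) + (rp - rm) * sinc (cp * (x + y)))

/-- The orthogonal projection of `L²(ℝ)` onto the Paley–Wiener space `PW_c(ℝ)`,
evaluated pointwise: `Π_c φ(x) = (c/π) ∫ sinc(c(x - y)) φ(y) dy`. -/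
noncomputable def PiProj (c : ℝ) (φ : ℝ → ℂ) (x : ℝ) : ℂ :=
  ((c / Real.pi : ℝ) : ℂ) * ∫ y : ℝ, ((sinc (c * (x - y)) : ℝ) : ℂ) * φ y

/-- The `L²`-normalized dilation `δ_a φ(x) = √a · φ(a x)`. -/
noncomputable def dil (a : ℝ) (φ : ℝ → ℂ) (x : ℝ) : ℂ :=
  ((Real.sqrt a : ℝ) : ℂ) * φ (a * x)

open MeasureTheory Set
open scoped ENNReal

section Aux

lemma sinc_abs_le_one (t : ℝ) : |sinc t| ≤ 1 := by
  unfold sinc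
  split_ifs with h
  · norm_num
  · rw [abs_div, div_le_one (abs_pos.mpr h)]
    exact Real.abs_sin_le_abs

lemma measurable_sinc : Measurable sinc := by
  unfold sinc
  exact Measurable.ite (measurableSet_eq) measurable_const
    (Real.measurable_sin.div measurable_id)

lemma sinc_neg (t : ℝ) : sinc (-t) = sinc t := by
  unfold sinc
  rcases eq_or_ne t 0 with h | h
  · simp [h]
  · rw [if_neg (neg_ne_zero.mpr h), if_neg h, Real.sin_neg, neg_div_neg_eq]

lemma sinc_sq_le_one (t : ℝ) : sinc t ^ 2 ≤ 1 := by
  have h := sinc_abs_le_one t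
  nlinarith [abs_nonneg (sinc t), sq_abs (sinc t)]

lemma integrable_sinc_sq : Integrable (fun t : ℝ => sinc t ^ 2) := by
  have hmeas : Measurable fun t : ℝ => sinc t ^ 2 := measurable_sinc.pow_const 2
  have hIcc : IntegrableOn (fun t : ℝ => sinc t ^ 2) (Icc (-1 : ℝ) 1) := by
    apply Measure.integrableOn_of_bounded (M := 1) (by simp)
      (hmeas.aestronglyMeasurable)
    filter_upwards with t
    rw [Real.norm_eq_abs, abs_of_nonneg (sq_nonneg _)]
    exact sinc_sq_le_one t
  have hIoi : IntegrableOn (fun t : ℝ => sinc t ^ 2) (Ioi (1 : ℝ)) := by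
    have h2 : IntegrableOn (fun t : ℝ => t ^ (-2 : ℝ)) (Ioi (1 : ℝ)) :=
      integrableOn_Ioi_rpow_of_lt (by norm_num) one_pos
    refine h2.mono' hmeas.aestronglyMeasurable.restrict ?_
    filter_upwards [ae_restrict_mem measurableSet_Ioi] with t ht
    have ht1 : (1 : ℝ) < t := ht
    have ht0 : (0 : ℝ) < t := by linarith
    have hs : sinc t = Real.sin t / t := by unfold sinc; rw [if_neg ht0.ne']
    rw [Real.norm_eq_abs, abs_of_nonneg (sq_nonneg _), hs, div_pow,
      Real.rpow_neg ht0.le, show ((2:ℝ)) = ((2:ℕ):ℝ) by norm_num, Real.rpow_natCast]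
    rw [div_le_iff₀ (by positivity), inv_mul_cancel₀ (by positivity)]
    nlinarith [Real.neg_one_le_sin t, Real.sin_le_one t]
  have hIio : IntegrableOn (fun t : ℝ => sinc t ^ 2) (Iio (-1 : ℝ)) := by
    have hneg : IntegrableOn (fun t : ℝ => sinc (-t) ^ 2) (Iio (-1 : ℝ)) := by
      have m : MeasurableEmbedding fun x : ℝ => -x :=
        (Homeomorph.neg ℝ).measurableEmbedding
      unfold IntegrableOn
      rw [show (volume : Measure ℝ) = Measure.map Neg.neg volume from
        (Measure.map_neg_eq_self _).symm, Measure.restrict_map m.measurable measurableSet_Iio]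
      rw [m.integrable_map_iff]
      simp [Function.comp_def, neg_preimage, neg_Iio]
      exact hIoi
    exact hneg.congr_fun (fun t _ => by show sinc (-t) ^ 2 = _; rw [sinc_neg]) measurableSet_Iio
  have hU : IntegrableOn (fun t : ℝ => sinc t ^ 2) (Iio (-1:ℝ) ∪ (Icc (-1:ℝ) 1 ∪ Ioi 1)) :=
    hIio.union (hIcc.union hIoi)
  rw [← integrableOn_univ]
  refine hU.mono_set fun t _ => ?_
  rcases lt_or_ge t (-1) with h | h
  · exact Or.inl h
  rcases le_or_gt t 1 with h' | h'
  · exact Or.inr (Or.inl ⟨h, h'⟩)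
  · exact Or.inr (Or.inr h')

lemma integrable_sinc_affine_sq (c d : ℝ) (hc : c ≠ 0) :
    Integrable (fun y : ℝ => sinc (d + c * y) ^ 2) := by
  have h1 : Integrable (fun u : ℝ => sinc (d + u) ^ 2) := integrable_sinc_sq.comp_add_left d
  exact h1.comp_mul_left' hc

lemma memLp_sinc_affine (c d : ℝ) (hc : c ≠ 0) :
    MemLp (fun y : ℝ => ((sinc (d + c * y) : ℝ) : ℂ)) 2 volume := by
  have hm : AEStronglyMeasurable (fun y : ℝ => ((sinc (d + c * y) : ℝ) : ℂ)) volume :=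
    (Complex.measurable_ofReal.comp
      (measurable_sinc.comp (measurable_const.add (measurable_id.const_mul c)))).aestronglyMeasurable
  rw [memLp_two_iff_integrable_sq_norm hm]
  have := integrable_sinc_affine_sq c d hc
  simpa [Complex.norm_real, Real.norm_eq_abs, sq_abs] using this

lemma integrable_sinc_mul (c d : ℝ) (hc : c ≠ 0) {g : ℝ → ℂ} (hg : MemLp g 2 volume) :
    Integrable (fun y : ℝ => ((sinc (d + c * y) : ℝ) : ℂ) * g y) := by
  rw [← memLp_one_iff_integrable]
  have h := hg.smul (memLp_sinc_affine c d hc)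
    (r := (1 : ℝ≥0∞))
  exact h

end Aux

/-- If `f ∈ L²(ℝ)` satisfies the reproducing identity of the toy model, then for `x > 0`,
`f(x) = Π_{c₊}[f₊ + (ρ₊ - ρ₋)·f̌₊·𝟙_{(-∞,0]} + 2ρ₋·√(c₋/c₊)·(δ_{c₊/c₋} f₋)·𝟙_{(-∞,0]}](x)`,
where `f₋ = f·𝟙_{(-∞,0]}`, `f₊ = f·𝟙_{(0,∞)}` and `f̌₊(x) = f₊(-x)`. -/
theorem toy_positive_part_formula (pm pp Ω : ℝ) (hpm : 0 < pm) (hpp : 0 < pp)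
    (hΩ : 0 < Ω) (f : ℝ → ℂ)
    (hf2 : MeasureTheory.MemLp f 2 MeasureTheory.volume)
    (hf : ∀ x : ℝ, f x = ∫ y : ℝ, ((toyKernel pm pp Ω x y : ℝ) : ℂ) * f y) :
    ∀ x : ℝ, 0 < x →
      f x = PiProj (Real.sqrt (Ω / pp))
        (fun y => (Set.Ioi (0 : ℝ)).indicator f y
          + (((Real.sqrt pp - Real.sqrt pm) / (Real.sqrt pm + Real.sqrt pp) : ℝ) : ℂ) *
              (Set.Iic (0 : ℝ)).indicator (fun t => (Set.Ioi (0 : ℝ)).indicator f (-t)) y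
          + ((2 * (Real.sqrt pm / (Real.sqrt pm + Real.sqrt pp)) *
              Real.sqrt (Real.sqrt (Ω / pm) / Real.sqrt (Ω / pp)) : ℝ) : ℂ) *
              (Set.Iic (0 : ℝ)).indicator
                (dil (Real.sqrt (Ω / pp) / Real.sqrt (Ω / pm))
                  ((Set.Iic (0 : ℝ)).indicator f)) y) x := by
  intro x hx
  have hcm0 : 0 < Real.sqrt (Ω / pm) := Real.sqrt_pos.mpr (div_pos hΩ hpm)
  have hcp0 : 0 < Real.sqrt (Ω / pp) := Real.sqrt_pos.mpr (div_pos hΩ hpp)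
  set cm := Real.sqrt (Ω / pm) with hcm
  set cp := Real.sqrt (Ω / pp) with hcp
  set rm := Real.sqrt pm / (Real.sqrt pm + Real.sqrt pp) with hrm
  set rp := Real.sqrt pp / (Real.sqrt pm + Real.sqrt pp) with hrp
  set a := cp / cm with ha
  have ha0 : 0 < a := div_pos hcp0 hcm0
  set fp := (Set.Ioi (0:ℝ)).indicator f with hfp
  set fm := (Set.Iic (0:ℝ)).indicator f with hfm
  have hfpL : MemLp fp 2 volume := hf2.indicator measurableSet_Ioi
  have hfmL : MemLp fm 2 volume := hf2.indicator measurableSet_Iic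
  have hsub : (Real.sqrt pp - Real.sqrt pm) / (Real.sqrt pm + Real.sqrt pp) = rp - rm := by
    rw [hrm, hrp]; exact sub_div _ _ _
  -- the three canonical integrands
  have hI1 : Integrable (fun y : ℝ => ((sinc (cp * (x - y)) : ℝ) : ℂ) * fp y) volume := by
    have h := integrable_sinc_mul (-cp) (cp * x) (neg_ne_zero.mpr hcp0.ne') hfpL
    simpa only [show ∀ y : ℝ, cp * x + -cp * y = cp * (x - y) from fun y => by ring] using h
  have hI2 : Integrable (fun y : ℝ => ((sinc (cp * (x + y)) : ℝ) : ℂ) * fp y) volume := by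
    have h := integrable_sinc_mul cp (cp * x) hcp0.ne' hfpL
    simpa only [show ∀ y : ℝ, cp * x + cp * y = cp * (x + y) from fun y => by ring] using h
  have hI3 : Integrable (fun y : ℝ => ((sinc (cp * x - cm * y) : ℝ) : ℂ) * fm y) volume := by
    have h := integrable_sinc_mul (-cm) (cp * x) (neg_ne_zero.mpr hcm0.ne') hfmL
    simpa only [show ∀ y : ℝ, cp * x + -cm * y = cp * x - cm * y from fun y => by ring] using h
  have hI2n : Integrable (fun y : ℝ => ((sinc (cp * (x + -y)) : ℝ) : ℂ) * fp (-y)) volume :=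
    hI2.comp_neg
  have hI3a : Integrable (fun y : ℝ => ((sinc (cp * x - cm * (a * y)) : ℝ) : ℂ) * fm (a * y))
      volume := hI3.comp_mul_left' ha0.ne'
  have hxne : ¬ x ≤ 0 := not_le.mpr hx
  -- pointwise kernel identity
  have hker : ∀ y : ℝ, ((toyKernel pm pp Ω x y : ℝ) : ℂ) * f y
      = ((cp / Real.pi : ℝ) : ℂ) * (((sinc (cp * (x - y)) : ℝ) : ℂ) * fp y)
        + (((cp / Real.pi * (rp - rm) : ℝ) : ℂ) * (((sinc (cp * (x + y)) : ℝ) : ℂ) * fp y)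
        + ((2 * cm * rm / Real.pi : ℝ) : ℂ) * (((sinc (cp * x - cm * y) : ℝ) : ℂ) * fm y)) := by
    intro y
    simp only [toyKernel]
    rw [if_neg hxne]
    rw [← hcm, ← hcp, ← hrm, ← hrp]
    by_cases hy : y ≤ 0
    · rw [if_pos hy]
      have hfpy : fp y = 0 := by
        rw [hfp]; exact Set.indicator_of_notMem (by simp only [Set.mem_Ioi, not_lt]; exact hy) f
      have hfmy : fm y = f y := by rw [hfm]; exact Set.indicator_of_mem (Set.mem_Iic.mpr hy) f
      rw [hfpy, hfmy]
      push_cast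
      ring
    · rw [if_neg hy]
      have hfpy : fp y = f y := by
        rw [hfp]; exact Set.indicator_of_mem (Set.mem_Ioi.mpr (not_le.mp hy)) f
      have hfmy : fm y = 0 := by
        rw [hfm]; exact Set.indicator_of_notMem (by simpa using hy) f
      rw [hfpy, hfmy]
      push_cast
      ring
  -- LHS
  have hL : f x
      = ((cp / Real.pi : ℝ) : ℂ) * (∫ y : ℝ, ((sinc (cp * (x - y)) : ℝ) : ℂ) * fp y)
        + (((cp / Real.pi * (rp - rm) : ℝ) : ℂ) *
            (∫ y : ℝ, ((sinc (cp * (x + y)) : ℝ) : ℂ) * fp y)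
        + ((2 * cm * rm / Real.pi : ℝ) : ℂ) *
            (∫ y : ℝ, ((sinc (cp * x - cm * y) : ℝ) : ℂ) * fm y)) := by
    have h2' : Integrable (fun y : ℝ => ((cp / Real.pi * (rp - rm) : ℝ) : ℂ) *
        (((sinc (cp * (x + y)) : ℝ) : ℂ) * fp y)) volume := hI2.const_mul _
    have h3' : Integrable (fun y : ℝ => ((2 * cm * rm / Real.pi : ℝ) : ℂ) *
        (((sinc (cp * x - cm * y) : ℝ) : ℂ) * fm y)) volume := hI3.const_mul _
    have h23 : Integrable (fun y : ℝ => ((cp / Real.pi * (rp - rm) : ℝ) : ℂ) *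
        (((sinc (cp * (x + y)) : ℝ) : ℂ) * fp y)
        + ((2 * cm * rm / Real.pi : ℝ) : ℂ) *
        (((sinc (cp * x - cm * y) : ℝ) : ℂ) * fm y)) volume := h2'.add h3'
    rw [hf x]
    simp only [hker]
    rw [integral_add (hI1.const_mul _) h23, integral_add h2' h3',
      integral_const_mul _ _, integral_const_mul _ _, integral_const_mul _ _]
  -- pointwise identity for the projection integrand
  have hG : ∀ y : ℝ,
      ((sinc (cp * (x - y)) : ℝ) : ℂ) *
        (fp y
          + (((Real.sqrt pp - Real.sqrt pm) / (Real.sqrt pm + Real.sqrt pp) : ℝ) : ℂ) *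
              (Set.Iic (0 : ℝ)).indicator (fun t => fp (-t)) y
          + ((2 * rm * Real.sqrt (cm / cp) : ℝ) : ℂ) *
              (Set.Iic (0 : ℝ)).indicator (dil a fm) y)
      = ((sinc (cp * (x - y)) : ℝ) : ℂ) * fp y
        + (((rp - rm : ℝ) : ℂ) * (((sinc (cp * (x + -y)) : ℝ) : ℂ) * fp (-y))
        + ((2 * rm * Real.sqrt (cm / cp) * Real.sqrt a : ℝ) : ℂ) *
            (((sinc (cp * x - cm * (a * y)) : ℝ) : ℂ) * fm (a * y))) := by
    intro y
    have e1 : cp * (x + -y) = cp * (x - y) := by ring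
    have e2 : cp * x - cm * (a * y) = cp * (x - y) := by
      rw [ha]; field_simp
    rw [hsub, e1, e2]
    by_cases hy : y ≤ 0
    · rw [Set.indicator_of_mem (Set.mem_Iic.mpr hy), Set.indicator_of_mem (Set.mem_Iic.mpr hy)]
      simp only [dil]
      push_cast
      ring
    · rw [Set.indicator_of_notMem (by simpa using hy),
        Set.indicator_of_notMem (by simpa using hy)]
      have h1 : fp (-y) = 0 := by
        rw [hfp]
        exact Set.indicator_of_notMem
          (by simp only [Set.mem_Ioi, not_lt]; linarith [not_le.mp hy]) f
      have h2 : fm (a * y) = 0 := by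
        rw [hfm]
        exact Set.indicator_of_notMem
          (by simp only [Set.mem_Iic, not_le]; exact mul_pos ha0 (not_le.mp hy)) f
      rw [h1, h2]
      ring
  -- substitution identities
  have hBneg : (∫ y : ℝ, ((sinc (cp * (x + -y)) : ℝ) : ℂ) * fp (-y))
      = ∫ y : ℝ, ((sinc (cp * (x + y)) : ℝ) : ℂ) * fp y :=
    integral_neg_eq_self (fun z => ((sinc (cp * (x + z)) : ℝ) : ℂ) * fp z) volume
  have hCa : (∫ y : ℝ, ((sinc (cp * x - cm * (a * y)) : ℝ) : ℂ) * fm (a * y))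
      = (cm / cp : ℝ) • ∫ y : ℝ, ((sinc (cp * x - cm * y) : ℝ) : ℂ) * fm y := by
    rw [show (cm / cp : ℝ) = |a⁻¹| from by
      rw [ha, inv_div, abs_of_pos (div_pos hcm0 hcp0)]]
    exact MeasureTheory.Measure.integral_comp_mul_left
      (fun z => ((sinc (cp * x - cm * z) : ℝ) : ℂ) * fm z) a
  -- RHS
  have hR : PiProj cp
      (fun y => fp y
        + (((Real.sqrt pp - Real.sqrt pm) / (Real.sqrt pm + Real.sqrt pp) : ℝ) : ℂ) *
            (Set.Iic (0 : ℝ)).indicator (fun t => fp (-t)) y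
        + ((2 * rm * Real.sqrt (cm / cp) : ℝ) : ℂ) *
            (Set.Iic (0 : ℝ)).indicator (dil a fm) y) x
      = ((cp / Real.pi : ℝ) : ℂ) *
          ((∫ y : ℝ, ((sinc (cp * (x - y)) : ℝ) : ℂ) * fp y)
          + (((rp - rm : ℝ) : ℂ) * (∫ y : ℝ, ((sinc (cp * (x + y)) : ℝ) : ℂ) * fp y)
          + ((2 * rm * Real.sqrt (cm / cp) * Real.sqrt a : ℝ) : ℂ) *
              ((cm / cp : ℝ) • ∫ y : ℝ, ((sinc (cp * x - cm * y) : ℝ) : ℂ) * fm y))) := by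
    calc PiProj cp _ x
        = ((cp / Real.pi : ℝ) : ℂ) * ∫ y : ℝ,
            ((sinc (cp * (x - y)) : ℝ) : ℂ) *
              (fp y
                + (((Real.sqrt pp - Real.sqrt pm) / (Real.sqrt pm + Real.sqrt pp) : ℝ) : ℂ) *
                    (Set.Iic (0 : ℝ)).indicator (fun t => fp (-t)) y
                + ((2 * rm * Real.sqrt (cm / cp) : ℝ) : ℂ) *
                    (Set.Iic (0 : ℝ)).indicator (dil a fm) y) := rfl
      _ = ((cp / Real.pi : ℝ) : ℂ) * ∫ y : ℝ,
            (((sinc (cp * (x - y)) : ℝ) : ℂ) * fp y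
            + (((rp - rm : ℝ) : ℂ) * (((sinc (cp * (x + -y)) : ℝ) : ℂ) * fp (-y))
            + ((2 * rm * Real.sqrt (cm / cp) * Real.sqrt a : ℝ) : ℂ) *
                (((sinc (cp * x - cm * (a * y)) : ℝ) : ℂ) * fm (a * y)))) := by
          congr 1
          exact integral_congr_ae (Filter.Eventually.of_forall hG)
      _ = _ := by
          have h2' : Integrable (fun y : ℝ => ((rp - rm : ℝ) : ℂ) *
              (((sinc (cp * (x + -y)) : ℝ) : ℂ) * fp (-y))) volume := hI2n.const_mul _
          have h3' : Integrable (fun y : ℝ =>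
              ((2 * rm * Real.sqrt (cm / cp) * Real.sqrt a : ℝ) : ℂ) *
              (((sinc (cp * x - cm * (a * y)) : ℝ) : ℂ) * fm (a * y))) volume :=
            hI3a.const_mul _
          have h23 : Integrable (fun y : ℝ => ((rp - rm : ℝ) : ℂ) *
              (((sinc (cp * (x + -y)) : ℝ) : ℂ) * fp (-y))
              + ((2 * rm * Real.sqrt (cm / cp) * Real.sqrt a : ℝ) : ℂ) *
              (((sinc (cp * x - cm * (a * y)) : ℝ) : ℂ) * fm (a * y))) volume := h2'.add h3'
          rw [integral_add hI1 h23, integral_add h2' h3',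
            integral_const_mul _ _, integral_const_mul _ _, hBneg, hCa]
  rw [hR, hL]
  -- final scalar arithmetic
  have hsr : Real.sqrt (cm / cp) * Real.sqrt a = 1 := by
    rw [← Real.sqrt_mul (by positivity),
      show cm / cp * a = 1 from by rw [ha]; field_simp]
    exact Real.sqrt_one
  have hco : (cp / Real.pi) * (2 * rm * Real.sqrt (cm / cp) * Real.sqrt a * (cm / cp))
      = 2 * cm * rm / Real.pi := by
    calc (cp / Real.pi) * (2 * rm * Real.sqrt (cm / cp) * Real.sqrt a * (cm / cp))
        = (Real.sqrt (cm / cp) * Real.sqrt a) * ((cp / Real.pi) * (2 * rm * (cm / cp))) := by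
          ring
      _ = (cp / Real.pi) * (2 * rm * (cm / cp)) := by rw [hsr, one_mul]
      _ = 2 * cm * rm / Real.pi := by
          field_simp
  have hcoC := congrArg (fun r : ℝ => (r : ℂ)) hco
  push_cast at hcoC
  rw [Complex.real_smul]
  push_cast
  linear_combination (-(∫ y : ℝ, ((sinc (cp * x - cm * y) : ℝ) : ℂ) * fm y)) * hcoC
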